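/- Let k be a field, d >= 1, and R = k[x_1, ..., x_d]. If I and J are nonzero monomial ideals of R, then NP(\overline{IJ}) = NP(IJ) = NP(I) + NP(J), where the sum is the Minkowski sum of subsets of \mathbb{R}^d. That is, the Newton polyhedron map I \mapsto NP(I) is a monoid homomorphism from integrally closed monomial ideals under I*J = \overline{IJ} to convex subsets of \mathbb{R}^d under Minkowski addition. -/

import Mathlib

/-- `x` satisfies an equation of integral dependence over the ideal `I`:
`x ^ n + a 1 * x ^ (n-1) + ⋯ + a (n-1) * x + a n = 0` with `a i ∈ I ^ i`. -/
def IsIntegralOverIdeal {A : Type*} [CommRing A] (I : Ideal A) (x : A) : Prop :=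
  ∃ n : ℕ, 0 < n ∧ ∃ a : ℕ → A, (∀ i, 1 ≤ i → i ≤ n → a i ∈ I ^ i) ∧
    x ^ n + ∑ i ∈ Finset.Icc 1 n, a i * x ^ (n - i) = 0

/-- The integral closure `\overline{I}` of an ideal `I`.  The set of elements integral
over `I` is in fact an ideal, so taking the ideal span of this set does not change it. -/
def intCl {A : Type*} [CommRing A] (I : Ideal A) : Ideal A :=
  Ideal.span {x | IsIntegralOverIdeal I x}

open MvPolynomial Pointwise in
/-- A monomial ideal: an ideal generated by a set of monomials `x^α`. -/
def IsMonomialIdeal {k : Type*} [Field k] {d : ℕ} (I : Ideal (MvPolynomial (Fin d) k)) : Prop :=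
  ∃ S : Set (Fin d →₀ ℕ), I = Ideal.span ((fun α => monomial α (1 : k)) '' S)

/-- The exponent set `E(I) = { α ∈ ℕ^d | x^α ∈ I }` of a (monomial) ideal. -/
def expSet {k : Type*} [Field k] {d : ℕ} (I : Ideal (MvPolynomial (Fin d) k)) :
    Set (Fin d →₀ ℕ) :=
  {α | MvPolynomial.monomial α (1 : k) ∈ I}

/-- The natural embedding `ℕ^d → ℝ^d` of exponent vectors. -/
noncomputable def toRd {d : ℕ} (α : Fin d →₀ ℕ) : Fin d → ℝ := fun i => (α i : ℝ)

/-- The Newton polyhedron `NP(I) = conv(E(I)) ⊆ ℝ^d`. -/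
noncomputable def NP {k : Type*} [Field k] {d : ℕ} (I : Ideal (MvPolynomial (Fin d) k)) :
    Set (Fin d → ℝ) :=
  convexHull ℝ (toRd '' expSet I)

section Aux

open MvPolynomial Pointwise

variable {k : Type*} [Field k] {d : ℕ}

/-- abbreviation for span of monomials -/
noncomputable def msp (S : Set (Fin d →₀ ℕ)) : Ideal (MvPolynomial (Fin d) k) :=
  Ideal.span ((fun α => monomial α (1 : k)) '' S)

lemma toRd_add (a b : Fin d →₀ ℕ) : toRd (a + b) = toRd a + toRd b := by
  funext i; simp [toRd]

lemma toRd_zero : toRd (0 : Fin d →₀ ℕ) = 0 := by funext i; simp [toRd]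

lemma mem_msp_support {S : Set (Fin d →₀ ℕ)} {p : MvPolynomial (Fin d) k}
    (hp : p ∈ msp S) : ∀ δ ∈ p.support, ∃ α ∈ S, α ≤ δ := by
  classical
  refine Submodule.span_induction ?_ ?_ ?_ ?_ hp
  · rintro x ⟨α, hα, rfl⟩ δ hδ
    rw [MvPolynomial.support_monomial] at hδ
    simp only [one_ne_zero, if_false, Finset.mem_singleton] at hδ
    exact ⟨α, hα, hδ ▸ le_refl α⟩
  · intro δ hδ; simp at hδ
  · intro x y hx hy ihx ihy δ hδ
    rcases Finset.mem_union.1 (MvPolynomial.support_add hδ) with h | h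
    exacts [ihx δ h, ihy δ h]
  · intro r x hx ihx δ hδ
    rw [smul_eq_mul] at hδ
    obtain ⟨a, ha, b, hb, rfl⟩ := Finset.mem_add.1 (MvPolynomial.support_mul r x hδ)
    obtain ⟨α, hα, hle⟩ := ihx b hb
    exact ⟨α, hα, hle.trans (le_add_self)⟩

lemma monomial_mem_msp {S : Set (Fin d →₀ ℕ)} {δ : Fin d →₀ ℕ} (c : k)
    (h : ∃ α ∈ S, α ≤ δ) : monomial δ c ∈ (msp S : Ideal (MvPolynomial (Fin d) k)) := by
  obtain ⟨α, hα, hle⟩ := h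
  have : monomial δ c = monomial (δ - α) c * monomial α (1 : k) := by
    rw [monomial_mul, mul_one, tsub_add_cancel_of_le hle]
  rw [this]
  exact Ideal.mul_mem_left _ _ (Ideal.subset_span ⟨α, hα, rfl⟩)

lemma expSet_upward {K : Ideal (MvPolynomial (Fin d) k)} {α δ : Fin d →₀ ℕ}
    (h : α ∈ expSet K) (hle : α ≤ δ) : δ ∈ expSet K := by
  have : monomial δ (1:k) = monomial (δ - α) (1:k) * monomial α (1 : k) := by
    rw [monomial_mul, mul_one, tsub_add_cancel_of_le hle]
  simpa only [expSet, Set.mem_setOf_eq, this] using Ideal.mul_mem_left _ _ h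

lemma mem_expSet_msp {S : Set (Fin d →₀ ℕ)} {δ : Fin d →₀ ℕ} :
    δ ∈ expSet (msp S : Ideal (MvPolynomial (Fin d) k)) ↔ ∃ α ∈ S, α ≤ δ := by
  classical
  constructor
  · intro h
    have := mem_msp_support h δ ?_
    · exact this
    · rw [MvPolynomial.support_monomial]; simp
  · exact monomial_mem_msp 1

lemma support_subset_expSet {K : Ideal (MvPolynomial (Fin d) k)} (hK : IsMonomialIdeal K)
    {p : MvPolynomial (Fin d) k} (hp : p ∈ K) : ∀ δ ∈ p.support, δ ∈ expSet K := by
  obtain ⟨S, rfl⟩ := hK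
  intro δ hδ
  exact mem_expSet_msp.2 (mem_msp_support hp δ hδ)

lemma msp_mul (S T : Set (Fin d →₀ ℕ)) :
    (msp S : Ideal (MvPolynomial (Fin d) k)) * msp T = msp (S + T) := by
  rw [msp, msp, msp, Ideal.span_mul_span']
  congr 1
  ext p
  simp only [Set.mem_mul, Set.mem_image, Set.mem_add]
  constructor
  · rintro ⟨a, ⟨α, hα, rfl⟩, b, ⟨β, hβ, rfl⟩, rfl⟩
    exact ⟨α + β, ⟨α, hα, β, hβ, rfl⟩, by rw [monomial_mul, mul_one]⟩
  · rintro ⟨γ, ⟨α, hα, β, hβ, rfl⟩, rfl⟩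
    exact ⟨monomial α 1, ⟨α, hα, rfl⟩, monomial β 1, ⟨β, hβ, rfl⟩, by rw [monomial_mul, mul_one]⟩

lemma IsMonomialIdeal.mul {I J : Ideal (MvPolynomial (Fin d) k)}
    (hI : IsMonomialIdeal I) (hJ : IsMonomialIdeal J) : IsMonomialIdeal (I * J) := by
  obtain ⟨S, rfl⟩ := hI; obtain ⟨T, rfl⟩ := hJ
  exact ⟨S + T, msp_mul S T⟩

lemma IsMonomialIdeal.pow {K : Ideal (MvPolynomial (Fin d) k)} (hK : IsMonomialIdeal K) :
    ∀ n : ℕ, IsMonomialIdeal (K ^ n)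
  | 0 => by
      refine ⟨{0}, ?_⟩
      rw [pow_zero, Ideal.one_eq_top, Set.image_singleton]
      rw [show monomial (0 : Fin d →₀ ℕ) (1:k) = 1 from rfl]
      simp [Ideal.span_singleton_one]
  | (n+1) => by
      rw [pow_succ]
      exact (IsMonomialIdeal.pow hK n).mul hK

lemma expSet_mul {I J : Ideal (MvPolynomial (Fin d) k)}
    (hI : IsMonomialIdeal I) (hJ : IsMonomialIdeal J) :
    expSet (I * J) = expSet I + expSet J := by
  obtain ⟨S, rfl⟩ := hI; obtain ⟨T, rfl⟩ := hJ
  ext δ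
  constructor
  · intro h
    rw [show Ideal.span ((fun α => monomial α (1:k)) '' S) = msp S from rfl,
      show Ideal.span ((fun α => monomial α (1:k)) '' T) = msp T from rfl,
      msp_mul] at h
    obtain ⟨γ, ⟨α, hα, β, hβ, rfl⟩, hle⟩ := mem_expSet_msp.1 h
    have hαδ : α ≤ δ := le_trans (le_add_self.trans (le_of_eq (add_comm β α))) hle
    refine ⟨α, mem_expSet_msp.2 ⟨α, hα, le_refl α⟩, δ - α, ?_, add_tsub_cancel_of_le hαδ⟩
    refine expSet_upward (mem_expSet_msp.2 ⟨β, hβ, le_refl β⟩) ?_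
    rw [le_tsub_iff_left hαδ]
    exact hle
  · rintro ⟨x, hx, y, hy, rfl⟩
    have : monomial (x + y) (1:k) = monomial x (1:k) * monomial y 1 := by
      rw [monomial_mul, mul_one]
    simpa only [expSet, Set.mem_setOf_eq, this] using Ideal.mul_mem_mul hx hy

lemma le_intCl (K : Ideal (MvPolynomial (Fin d) k)) : K ≤ intCl K := by
  intro x hx
  refine Ideal.subset_span ⟨1, one_pos, fun i => if i = 1 then -x else 0, ?_, ?_⟩
  · intro i h1 h2
    have : i = 1 := le_antisymm h2 h1
    subst this
    simp only [if_pos rfl, pow_one]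
    exact neg_mem hx
  · simp

lemma exists_finset_gen {K : Ideal (MvPolynomial (Fin d) k)} (hK : IsMonomialIdeal K) :
    ∃ B : Finset (Fin d →₀ ℕ), K = msp (B : Set (Fin d →₀ ℕ)) ∧
      (B : Set (Fin d →₀ ℕ)) ⊆ expSet K := by
  classical
  obtain ⟨G, hG⟩ := IsNoetherian.noetherian K
  have hmem : ∀ δ ∈ (G.biUnion (fun p => p.support) : Finset (Fin d →₀ ℕ)), δ ∈ expSet K := by
    intro δ hδ
    rw [Finset.mem_biUnion] at hδ
    obtain ⟨g, hg, hδ⟩ := hδ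
    exact support_subset_expSet hK (by rw [← hG]; exact Submodule.subset_span hg) δ hδ
  refine ⟨G.biUnion (fun p => p.support), ?_, fun δ hδ => hmem δ (Finset.mem_coe.1 hδ)⟩
  apply le_antisymm
  · rw [← hG, Submodule.span_le]
    intro g hg
    rw [← MvPolynomial.support_sum_monomial_coeff g]
    refine Submodule.sum_mem _ fun δ hδ => ?_
    refine monomial_mem_msp _ ⟨δ, ?_, le_refl δ⟩
    rw [Finset.mem_coe, Finset.mem_biUnion]
    exact ⟨g, hg, hδ⟩
  · rw [msp, Ideal.span_le]
    rintro q ⟨δ, hδ, rfl⟩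
    exact hmem δ (Finset.mem_coe.1 hδ)

/-- the nonnegative orthant -/
def Orth (d : ℕ) : Set (Fin d → ℝ) := {v | ∀ i, 0 ≤ v i}

lemma convex_Orth : Convex ℝ (Orth d) := by
  intro x hx y hy a b ha hb _
  intro i
  have := hx i; have := hy i
  simp only [Pi.add_apply, Pi.smul_apply, smul_eq_mul]
  positivity

lemma isClosed_Orth : IsClosed (Orth d) := by
  have : Orth d = ⋂ i, (fun v : Fin d → ℝ => v i) ⁻¹' Set.Ici 0 := by
    ext v; simp [Orth, Set.mem_iInter]
  rw [this]
  exact isClosed_iInter fun i => isClosed_Ici.preimage (continuous_apply i)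

lemma orth_mem_conv {K : Ideal (MvPolynomial (Fin d) k)}
    {β : Fin d →₀ ℕ} (hβ : β ∈ expSet K) {v : Fin d → ℝ} (hv : v ∈ Orth d) :
    toRd β + v ∈ convexHull ℝ (toRd '' expSet K) := by
  classical
  obtain ⟨N, hN⟩ := exists_nat_ge (∑ i, v i)
  set N' : ℕ := N + 1 with hN'
  have hN'pos : (0:ℝ) < N' := by positivity
  have hsum : (∑ i, v i) ≤ N' := by
    refine hN.trans ?_; rw [hN']; push_cast; linarith
  set z : Option (Fin d) → Fin d → ℝ :=
    fun o => Option.elim o (toRd β) (fun i => toRd (β + Finsupp.single i N')) with hz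
  set w : Option (Fin d) → ℝ :=
    fun o => Option.elim o (1 - (∑ i, v i) / N') (fun i => v i / N') with hw
  have hzmem : ∀ o, z o ∈ toRd '' expSet K := by
    rintro (_ | i)
    · exact ⟨β, hβ, rfl⟩
    · exact ⟨β + Finsupp.single i N', expSet_upward hβ le_self_add, rfl⟩
  have hwnn : ∀ o, 0 ≤ w o := by
    rintro (_ | i)
    · simp only [hw, Option.elim]
      rw [sub_nonneg, div_le_one hN'pos]
      exact hsum
    · exact div_nonneg (hv i) hN'pos.le
  have hwsum : ∑ o : Option (Fin d), w o = 1 := by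
    rw [Fintype.sum_option]
    simp only [hw, Option.elim]
    rw [← Finset.sum_div]
    ring
  have hcomb : ∑ o : Option (Fin d), w o • z o = toRd β + v := by
    rw [Fintype.sum_option]
    funext j
    simp only [Finset.sum_apply, Pi.add_apply, Pi.smul_apply, smul_eq_mul, hw, hz, Option.elim]
    have h1 : ∀ i : Fin d, toRd (β + Finsupp.single i N') j
        = toRd β j + (if i = j then (N' : ℝ) else 0) := by
      intro i
      simp only [toRd, Finsupp.add_apply, Finsupp.single_apply]
      push_cast
      split_ifs <;> simp
    have h2 : ∑ i, v i / N' * (if i = j then (N':ℝ) else 0) = v j := by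
      simp only [mul_ite, mul_zero, Finset.sum_ite_eq', Finset.mem_univ, if_true]
      field_simp
    simp only [h1, mul_add]
    rw [Finset.sum_add_distrib, h2, ← Finset.sum_mul, ← Finset.sum_div]
    ring
  rw [← hcomb]
  exact (convex_convexHull ℝ _).sum_mem (fun o _ => hwnn o) hwsum (fun o _ => subset_convexHull ℝ _ (hzmem o))

lemma NP_eq {K : Ideal (MvPolynomial (Fin d) k)} {B : Finset (Fin d →₀ ℕ)}
    (hgen : K = msp (B : Set (Fin d →₀ ℕ))) (hBE : (B : Set (Fin d →₀ ℕ)) ⊆ expSet K) :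
    NP K = convexHull ℝ (toRd '' (B : Set (Fin d →₀ ℕ))) + Orth d := by
  apply Set.Subset.antisymm
  · apply convexHull_min
    · rintro x ⟨γ, hγ, rfl⟩
      rw [hgen] at hγ
      obtain ⟨β, hβ, hle⟩ := mem_expSet_msp.1 hγ
      refine ⟨toRd β, subset_convexHull ℝ _ ⟨β, hβ, rfl⟩, toRd γ - toRd β, ?_, by ring⟩
      intro i
      simp only [Pi.sub_apply, toRd, sub_nonneg, Nat.cast_le]
      exact hle i
    · exact ((convex_convexHull ℝ _).add convex_Orth)
  · rintro x ⟨c, hc, v, hv, rfl⟩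
    have hpt : ∀ b ∈ toRd '' (B : Set (Fin d →₀ ℕ)) + ({v} : Set (Fin d → ℝ)),
        b ∈ convexHull ℝ (toRd '' expSet K) := by
      rintro b ⟨y, ⟨β, hβ, rfl⟩, v', hv', rfl⟩
      rw [Set.mem_singleton_iff] at hv'
      subst hv'
      exact orth_mem_conv (hBE hβ) hv
    have hmem : c + v ∈ convexHull ℝ (toRd '' (B : Set (Fin d →₀ ℕ)) + ({v} : Set (Fin d → ℝ))) := by
      rw [convexHull_add, convexHull_singleton]
      exact Set.add_mem_add hc rfl
    exact convexHull_min hpt (convex_convexHull ℝ _) hmem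

lemma NP_add_orth {K : Ideal (MvPolynomial (Fin d) k)} (hK : IsMonomialIdeal K)
    {x v : Fin d → ℝ} (hx : x ∈ NP K) (hv : v ∈ Orth d) : x + v ∈ NP K := by
  obtain ⟨B, hgen, hBE⟩ := exists_finset_gen hK
  rw [NP_eq hgen hBE] at hx ⊢
  obtain ⟨c, hc, w, hw, rfl⟩ := hx
  exact ⟨c, hc, w + v, fun i => add_nonneg (hw i) (hv i), (add_assoc _ _ _).symm⟩

lemma sep_lemma {K : Ideal (MvPolynomial (Fin d) k)} (hK : IsMonomialIdeal K)
    {α : Fin d →₀ ℕ}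
    (hprop : ∀ (f : (Fin d → ℝ) →L[ℝ] ℝ) (c : ℝ),
      (∀ γ ∈ expSet K, c ≤ f (toRd γ)) → c ≤ f (toRd α)) :
    toRd α ∈ NP K := by
  obtain ⟨B, hgen, hBE⟩ := exists_finset_gen hK
  by_contra hmem
  rw [NP_eq hgen hBE] at hmem
  have hclosed : IsClosed (convexHull ℝ (toRd '' (B : Set (Fin d →₀ ℕ))) + Orth d) :=
    IsClosed.add_left_of_isCompact isClosed_Orth
      ((B.finite_toSet.image toRd).isCompact_convexHull ℝ)
  have hconv : Convex ℝ (convexHull ℝ (toRd '' (B : Set (Fin d →₀ ℕ))) + Orth d) :=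
    (convex_convexHull ℝ _).add convex_Orth
  obtain ⟨f, u, hfu, hbd⟩ := geometric_hahn_banach_point_closed hconv hclosed hmem
  have : u ≤ f (toRd α) := by
    refine hprop f u fun γ hγ => ?_
    have : toRd γ ∈ convexHull ℝ (toRd '' (B : Set (Fin d →₀ ℕ))) + Orth d := by
      rw [← NP_eq hgen hBE]
      exact subset_convexHull ℝ _ ⟨γ, hγ, rfl⟩
    exact (hbd _ this).le
  linarith

section Valuation

variable (f : (Fin d → ℝ) →L[ℝ] ℝ)

open Classical in
noncomputable def minval (p : MvPolynomial (Fin d) k) : ℝ :=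
  if hp : p = 0 then 0
  else p.support.inf'
    (by rwa [Finset.nonempty_iff_ne_empty, ne_eq, MvPolynomial.support_eq_empty]) fun δ => f (toRd δ)

lemma minval_le {p : MvPolynomial (Fin d) k} {δ : Fin d →₀ ℕ} (hδ : δ ∈ p.support) :
    minval f p ≤ f (toRd δ) := by
  have hp : p ≠ 0 := by rintro rfl; simp at hδ
  rw [minval, dif_neg hp]
  exact Finset.inf'_le _ hδ

lemma exists_minval {p : MvPolynomial (Fin d) k} (hp : p ≠ 0) :
    ∃ δ ∈ p.support, f (toRd δ) = minval f p := by
  rw [minval, dif_neg hp]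
  obtain ⟨δ, hδ, h⟩ := Finset.exists_mem_eq_inf' (s := p.support)
    (by rwa [Finset.nonempty_iff_ne_empty, ne_eq, MvPolynomial.support_eq_empty])
    (fun δ => f (toRd δ))
  exact ⟨δ, hδ, h.symm⟩

lemma le_minval {p : MvPolynomial (Fin d) k} (hp : p ≠ 0) {c : ℝ}
    (h : ∀ δ ∈ p.support, c ≤ f (toRd δ)) : c ≤ minval f p := by
  rw [minval, dif_neg hp]
  exact Finset.le_inf' _ _ h

noncomputable def restr (p : MvPolynomial (Fin d) k) (P : (Fin d →₀ ℕ) → Prop)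
    [DecidablePred P] : MvPolynomial (Fin d) k :=
  ∑ a ∈ p.support.filter P, monomial a (p.coeff a)

lemma coeff_restr (p : MvPolynomial (Fin d) k) (P : (Fin d →₀ ℕ) → Prop)
    [DecidablePred P] (δ : Fin d →₀ ℕ) :
    (restr p P).coeff δ = if P δ then p.coeff δ else 0 := by
  classical
  rw [restr, MvPolynomial.coeff_sum]
  simp only [MvPolynomial.coeff_monomial]
  rw [Finset.sum_ite_eq' (p.support.filter P) δ (fun a => p.coeff a)]
  by_cases hP : P δ
  · by_cases hs : δ ∈ p.support
    · rw [if_pos (Finset.mem_filter.2 ⟨hs, hP⟩), if_pos hP]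
    · rw [if_neg (fun hmem => hs (Finset.mem_filter.1 hmem).1), if_pos hP]
      exact (MvPolynomial.notMem_support_iff.1 hs).symm
  · rw [if_neg (fun hmem => hP (Finset.mem_filter.1 hmem).2), if_neg hP]

lemma exists_mul_min {p q : MvPolynomial (Fin d) k} (hp : p ≠ 0) (hq : q ≠ 0) :
    ∃ δ ∈ (p * q).support, f (toRd δ) = minval f p + minval f q := by
  classical
  set P : (Fin d →₀ ℕ) → Prop := fun a => f (toRd a) = minval f p with hP
  set Q : (Fin d →₀ ℕ) → Prop := fun b => f (toRd b) = minval f q with hQ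
  set p₀ := restr p P with hp₀
  set q₀ := restr q Q with hq₀
  have key : ∀ δ : Fin d →₀ ℕ, f (toRd δ) = minval f p + minval f q →
      (p * q).coeff δ = (p₀ * q₀).coeff δ := by
    intro δ hδ
    rw [MvPolynomial.coeff_mul, MvPolynomial.coeff_mul]
    refine Finset.sum_congr rfl fun ab hab => ?_
    have habδ : ab.1 + ab.2 = δ := Finset.HasAntidiagonal.mem_antidiagonal.1 hab
    rw [hp₀, hq₀, coeff_restr, coeff_restr]
    by_cases h1 : p.coeff ab.1 = 0
    · simp [h1]
    by_cases h2 : q.coeff ab.2 = 0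
    · simp [h2]
    have hm1 : minval f p ≤ f (toRd ab.1) :=
      minval_le f (MvPolynomial.mem_support_iff.2 h1)
    have hm2 : minval f q ≤ f (toRd ab.2) :=
      minval_le f (MvPolynomial.mem_support_iff.2 h2)
    have hsum : f (toRd ab.1) + f (toRd ab.2) = minval f p + minval f q := by
      rw [← map_add, ← toRd_add, habδ, hδ]
    rw [if_pos (by simp only [hP]; linarith), if_pos (by simp only [hQ]; linarith)]
  have hp₀ne : p₀ ≠ 0 := by
    obtain ⟨a, ha, hfa⟩ := exists_minval f hp
    intro h0
    have := coeff_restr p P a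
    rw [← hp₀, h0, if_pos hfa] at this
    exact MvPolynomial.mem_support_iff.1 ha this.symm
  have hq₀ne : q₀ ≠ 0 := by
    obtain ⟨b, hb, hfb⟩ := exists_minval f hq
    intro h0
    have := coeff_restr q Q b
    rw [← hq₀, h0, if_pos hfb] at this
    exact MvPolynomial.mem_support_iff.1 hb this.symm
  have hne : p₀ * q₀ ≠ 0 := mul_ne_zero hp₀ne hq₀ne
  obtain ⟨δ, hδ⟩ : (p₀ * q₀).support.Nonempty := by
    rwa [Finset.nonempty_iff_ne_empty, ne_eq, MvPolynomial.support_eq_empty]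
  obtain ⟨a, ha, b, hb, rfl⟩ := Finset.mem_add.1 (MvPolynomial.support_mul p₀ q₀ hδ)
  have hPa : P a := by
    have := coeff_restr p P a
    rw [← hp₀] at this
    by_contra hPa
    rw [if_neg hPa] at this
    exact MvPolynomial.mem_support_iff.1 ha this
  have hQb : Q b := by
    have := coeff_restr q Q b
    rw [← hq₀] at this
    by_contra hQb
    rw [if_neg hQb] at this
    exact MvPolynomial.mem_support_iff.1 hb this
  have hval : f (toRd (a + b)) = minval f p + minval f q := by
    rw [toRd_add, map_add, hPa, hQb]
  refine ⟨a + b, ?_, hval⟩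
  rw [MvPolynomial.mem_support_iff, key _ hval]
  exact MvPolynomial.mem_support_iff.1 hδ

lemma minval_mul {p q : MvPolynomial (Fin d) k} (hp : p ≠ 0) (hq : q ≠ 0) :
    minval f (p * q) = minval f p + minval f q := by
  apply le_antisymm
  · obtain ⟨δ, hδ, h⟩ := exists_mul_min f hp hq
    exact h ▸ minval_le f hδ
  · refine le_minval f (mul_ne_zero hp hq) fun δ hδ => ?_
    classical
    obtain ⟨a, ha, b, hb, rfl⟩ := Finset.mem_add.1 (MvPolynomial.support_mul p q hδ)
    rw [toRd_add, map_add]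
    exact add_le_add (minval_le f ha) (minval_le f hb)

lemma minval_one : minval f (1 : MvPolynomial (Fin d) k) = 0 := by
  rw [minval, dif_neg (one_ne_zero)]
  have hsupp : (1 : MvPolynomial (Fin d) k).support = {0} := by
    classical
    rw [show (1 : MvPolynomial (Fin d) k) = monomial 0 1 from rfl,
      MvPolynomial.support_monomial, if_neg one_ne_zero]
  simp_rw [hsupp]
  rw [Finset.inf'_singleton]
  rw [toRd_zero, map_zero]

lemma minval_pow {p : MvPolynomial (Fin d) k} (hp : p ≠ 0) :
    ∀ n : ℕ, minval f (p ^ n) = n * minval f p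
  | 0 => by rw [pow_zero, minval_one]; simp
  | (n+1) => by
      rw [pow_succ, minval_mul f (pow_ne_zero n hp) hp, minval_pow hp n]
      push_cast; ring

end Valuation

lemma pow_exp_bound {K : Ideal (MvPolynomial (Fin d) k)} (hK : IsMonomialIdeal K)
    (f : (Fin d → ℝ) →L[ℝ] ℝ) {c : ℝ} (hc : ∀ γ ∈ expSet K, c ≤ f (toRd γ)) :
    ∀ i : ℕ, 1 ≤ i → ∀ γ ∈ expSet (K ^ i), (i : ℝ) * c ≤ f (toRd γ) := by
  intro i hi
  induction i, hi using Nat.le_induction with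
  | base => intro γ hγ; rw [pow_one] at hγ; simpa using hc γ hγ
  | succ i hi ih =>
    intro γ hγ
    rw [pow_succ, expSet_mul (hK.pow i) hK] at hγ
    obtain ⟨x, hx, y, hy, rfl⟩ := hγ
    rw [toRd_add, map_add]
    push_cast
    have h1 := ih x hx
    have h2 := hc y hy
    linarith

lemma integral_support_bound {K : Ideal (MvPolynomial (Fin d) k)} (hK : IsMonomialIdeal K)
    {p : MvPolynomial (Fin d) k} (hp : IsIntegralOverIdeal K p)
    (f : (Fin d → ℝ) →L[ℝ] ℝ) {c : ℝ} (hc : ∀ γ ∈ expSet K, c ≤ f (toRd γ)) :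
    ∀ δ ∈ p.support, c ≤ f (toRd δ) := by
  by_cases hp0 : p = 0
  · subst hp0; intro δ hδ; simp at hδ
  intro δ hδ
  have hm : c ≤ minval f p := by
    obtain ⟨n, hn, a, ha, heq⟩ := hp
    set m := minval f p with hmdef
    have hpn : p ^ n ≠ 0 := pow_ne_zero n hp0
    obtain ⟨δ', hδ', hδ'val⟩ := exists_minval f hpn
    rw [minval_pow f hp0 n] at hδ'val
    have hco : (∑ i ∈ Finset.Icc 1 n, a i * p ^ (n - i)).coeff δ' ≠ 0 := by
      intro h0
      have hcoeq := congrArg (MvPolynomial.coeff δ') heq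
      rw [MvPolynomial.coeff_add, h0, add_zero, MvPolynomial.coeff_zero] at hcoeq
      exact MvPolynomial.mem_support_iff.1 hδ' hcoeq
    rw [MvPolynomial.coeff_sum] at hco
    obtain ⟨i, hi, hine⟩ := Finset.exists_ne_zero_of_sum_ne_zero hco
    obtain ⟨hi1, hi2⟩ := Finset.mem_Icc.1 hi
    classical
    obtain ⟨γ, hγ, ε, hε, hδ'eq⟩ := Finset.mem_add.1
      (MvPolynomial.support_mul (a i) (p ^ (n - i)) (MvPolynomial.mem_support_iff.2 hine))
    have hγb : (i : ℝ) * c ≤ f (toRd γ) := by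
      refine pow_exp_bound hK f hc i hi1 γ ?_
      exact support_subset_expSet (hK.pow i) (ha i hi1 hi2) γ hγ
    have hεb : ((n - i : ℕ) : ℝ) * m ≤ f (toRd ε) := by
      have := minval_le f hε
      rwa [minval_pow f hp0 (n - i)] at this
    have hval : f (toRd γ) + f (toRd ε) = (n : ℝ) * m := by
      rw [← map_add, ← toRd_add, hδ'eq, hδ'val]
    have hcast : ((n - i : ℕ) : ℝ) = (n : ℝ) - (i : ℝ) := by
      rw [Nat.cast_sub hi2]
    rw [hcast] at hεb
    have hipos : (0 : ℝ) < (i : ℝ) := by exact_mod_cast hi1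
    nlinarith
  exact hm.trans (minval_le f hδ)

lemma toRd_image_add (X Y : Set (Fin d →₀ ℕ)) :
    toRd '' (X + Y) = toRd '' X + toRd '' Y := by
  ext v
  simp only [Set.mem_image, Set.mem_add]
  constructor
  · rintro ⟨δ, ⟨x, hx, y, hy, rfl⟩, rfl⟩
    exact ⟨toRd x, ⟨x, hx, rfl⟩, toRd y, ⟨y, hy, rfl⟩, (toRd_add x y).symm⟩
  · rintro ⟨a, ⟨x, hx, rfl⟩, b, ⟨y, hy, rfl⟩, rfl⟩
    exact ⟨x + y, ⟨x, hx, y, hy, rfl⟩, toRd_add x y⟩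

theorem NP_star_hom' {k : Type*} [Field k] {d : ℕ} (hd : 1 ≤ d)
    (I J : Ideal (MvPolynomial (Fin d) k))
    (hI : IsMonomialIdeal I) (hJ : IsMonomialIdeal J)
    (hI0 : I ≠ ⊥) (hJ0 : J ≠ ⊥) :
    NP (intCl (I * J)) = NP (I * J) ∧ NP (I * J) = NP I + NP J := by
  have hK : IsMonomialIdeal (I * J) := hI.mul hJ
  constructor
  · apply Set.Subset.antisymm
    · apply convexHull_min ?_ (convex_convexHull ℝ _)
      rintro x ⟨δ, hδ, rfl⟩
      have main : ∀ p ∈ intCl (I * J), ∀ ε ∈ p.support, toRd ε ∈ NP (I * J) := by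
        intro p hp
        refine Submodule.span_induction ?_ ?_ ?_ ?_ hp
        · intro q hq ε hε
          exact sep_lemma hK fun f c hc => integral_support_bound hK hq f hc ε hε
        · intro ε hε; simp at hε
        · intro x y hx hy ihx ihy ε hε
          classical
          rcases Finset.mem_union.1 (MvPolynomial.support_add hε) with h | h
          exacts [ihx ε h, ihy ε h]
        · intro r x hx ihx ε hε
          classical
          rw [smul_eq_mul] at hε
          obtain ⟨a, ha, b, hb, rfl⟩ := Finset.mem_add.1 (MvPolynomial.support_mul r x hε)
          rw [toRd_add, add_comm]
          exact NP_add_orth hK (ihx b hb) fun i => by simp [toRd]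
      have hself : δ ∈ (monomial δ (1:k)).support := by
        classical
        rw [MvPolynomial.support_monomial, if_neg one_ne_zero]
        exact Finset.mem_singleton_self δ
      exact main _ hδ δ hself
    · exact convexHull_mono (Set.image_mono fun γ hγ => le_intCl _ hγ)
  · rw [NP, NP, NP, expSet_mul hI hJ, toRd_image_add, convexHull_add]

end Aux

open Pointwise in
/-- For nonzero monomial ideals, `NP(intCl (IJ)) = NP(IJ) = NP(I) + NP(J)` (Minkowski sum):
the Newton polyhedron is a monoid homomorphism. -/
theorem NP_star_hom {k : Type*} [Field k] {d : ℕ} (hd : 1 ≤ d)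
    (I J : Ideal (MvPolynomial (Fin d) k))
    (hI : IsMonomialIdeal I) (hJ : IsMonomialIdeal J)
    (hI0 : I ≠ ⊥) (hJ0 : J ≠ ⊥) :
    NP (intCl (I * J)) = NP (I * J) ∧ NP (I * J) = NP I + NP J := by
  exact NP_star_hom' hd I J hI hJ hI0 hJ0
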